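/- arXiv:2008.10345 — 4 statements merged into one kernel-verified Lean document; each statement's English description precedes it below -/
import Mathlib

section
/- Let q ∈ ℂ[x₁,…,xₙ,z] be a family of polynomials indexed by a ∈ ℂ, i.e., suppose for every a ∈ ℂ there exists q_a ∈ ℂ[x₁,…,xₙ,z] with q_a(0,…,0,a) ≠ 0 and q_a ∈ J for a fixed ideal J of ℂ[x₁,…,xₙ,z]. Then there exists q ∈ J such that 1 − q lies in the ideal (x₁,…,xₙ)·ℂ[x₁,…,xₙ,z]. -/
open MvPolynomial

noncomputable def phiAux (n : ℕ) : MvPolynomial (Fin n ⊕ Unit) ℂ →ₐ[ℂ] Polynomial ℂ :=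
  aeval (Sum.elim (fun _ => 0) (fun _ => Polynomial.X))

noncomputable def iotaAux (n : ℕ) : Polynomial ℂ →ₐ[ℂ] MvPolynomial (Fin n ⊕ Unit) ℂ :=
  Polynomial.aeval (X (Sum.inr ()))

/-- Let `J` be an ideal of `ℂ[x₁,…,xₙ,z]` (variables indexed by `Fin n ⊕ Unit`, with
`Sum.inl i` the `xᵢ` and `Sum.inr ()` the variable `z`).  Suppose that for every `a ∈ ℂ`
there is `q_a ∈ J` with `q_a(0,…,0,a) ≠ 0`.  Then there exists `q ∈ J` such that
`1 − q` lies in the ideal `(x₁,…,xₙ)`. -/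
theorem exists_elem_of_ideal_congruent_one (n : ℕ)
    (J : Ideal (MvPolynomial (Fin n ⊕ Unit) ℂ))
    (h : ∀ a : ℂ, ∃ q ∈ J,
      MvPolynomial.eval (Sum.elim (fun _ => (0 : ℂ)) (fun _ => a)) q ≠ 0) :
    ∃ q ∈ J, 1 - q ∈ Ideal.span
      (Set.range fun i : Fin n => (X (Sum.inl i) : MvPolynomial (Fin n ⊕ Unit) ℂ)) := by
  set φ := phiAux n with hφ
  -- compatibility: eval a ∘ φ = eval (Sum.elim 0 a)
  have hcompat : ∀ (a : ℂ) (p : MvPolynomial (Fin n ⊕ Unit) ℂ),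
      Polynomial.eval a (φ p)
        = MvPolynomial.eval (Sum.elim (fun _ => (0 : ℂ)) (fun _ => a)) p := by
    intro a p
    have : (Polynomial.aeval a).comp φ
        = (MvPolynomial.aeval (Sum.elim (fun _ => (0:ℂ)) (fun _ => a)) :
            MvPolynomial (Fin n ⊕ Unit) ℂ →ₐ[ℂ] ℂ) := by
      apply MvPolynomial.algHom_ext
      rintro (i | u) <;> simp [hφ, phiAux]
    have := congrArg (fun f => f p) this
    simpa [MvPolynomial.aeval_def, Polynomial.aeval_def] using this
  -- I := image of J
  set I : Ideal (Polynomial ℂ) := J.map φ with hI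
  have hIprop : ∀ a : ℂ, ∃ p ∈ I, Polynomial.eval a p ≠ 0 := by
    intro a
    obtain ⟨q, hqJ, hq⟩ := h a
    exact ⟨φ q, Ideal.mem_map_of_mem _ hqJ, by rw [hcompat]; exact hq⟩
  have hItop : I = ⊤ := by
    obtain ⟨g, hg⟩ := (IsPrincipalIdealRing.principal I).principal
    by_contra hne
    have hgnu : ¬ IsUnit g := by
      intro hu
      exact hne (by rw [hg]; exact Ideal.span_singleton_eq_top.mpr hu)
    have hg0 : g ≠ 0 := by
      rintro rfl
      obtain ⟨p, hpI, hp⟩ := hIprop 0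
      rw [hg] at hpI
      simp [Ideal.span_singleton_eq_bot.mpr rfl] at hpI
      exact hp (by simp [hpI])
    have hdeg : 0 < g.degree := Polynomial.degree_pos_of_ne_zero_of_nonunit hg0 hgnu
    obtain ⟨a, ha⟩ := Complex.exists_root hdeg
    obtain ⟨p, hpI, hp⟩ := hIprop a
    rw [hg] at hpI
    obtain ⟨c, rfl⟩ := Ideal.mem_span_singleton.mp hpI
    apply hp
    simp [Polynomial.eval_mul, ha.eq_zero]
  -- surjectivity of φ
  have hsurj : Function.Surjective φ := by
    intro p
    exact ⟨iotaAux n p, by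
      have : φ.comp (iotaAux n) = AlgHom.id ℂ (Polynomial ℂ) := by
        apply Polynomial.algHom_ext
        simp [hφ, phiAux, iotaAux]
      exact congrArg (fun f => f p) this⟩
  have h1 : (1 : Polynomial ℂ) ∈ I := hItop ▸ Submodule.mem_top
  rw [hI] at h1
  obtain ⟨q, hqJ, hq1⟩ := (Ideal.mem_map_iff_of_surjective φ hsurj).mp h1
  refine ⟨q, hqJ, ?_⟩
  -- 1 - q = ι(φ q) - q ∈ span
  set K := Ideal.span (Set.range fun i : Fin n =>
    (X (Sum.inl i) : MvPolynomial (Fin n ⊕ Unit) ℂ)) with hK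
  have key : ∀ p : MvPolynomial (Fin n ⊕ Unit) ℂ, iotaAux n (φ p) - p ∈ K := by
    intro p
    have : ((Ideal.Quotient.mkₐ ℂ K).comp ((iotaAux n).comp φ))
        = Ideal.Quotient.mkₐ ℂ K := by
      apply MvPolynomial.algHom_ext
      rintro (i | u)
      · have hx : (X (Sum.inl i) : MvPolynomial (Fin n ⊕ Unit) ℂ) ∈ K :=
          Ideal.subset_span ⟨i, rfl⟩
        simp [hφ, phiAux, iotaAux, Ideal.Quotient.eq_zero_iff_mem.mpr hx]
      · simp [hφ, phiAux, iotaAux]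
    have := congrArg (fun f => f p) this
    simp only [AlgHom.comp_apply, Ideal.Quotient.mkₐ_eq_mk] at this
    rw [← Ideal.Quotient.eq_zero_iff_mem]
    rw [map_sub, this, sub_self]
  have := key q
  rw [hq1] at this
  have h2 : iotaAux n 1 - q ∈ K := this
  simpa using h2
end

section
/- Let n ≥ 2 and let g ∈ ℂ[x₁,…,x_{n−1}] have an isolated singularity at the origin with Milnor number μ₀(g) = dim_ℂ ℂ[x₁,…,x_{n−1}]_{(x)}/(∂g/∂x₁,…,∂g/∂x_{n−1}). Then for every integer d ≥ 2, the polynomial h = g(x₁,…,x_{n−1}) + x_n^d has an isolated singularity at the origin of ℂⁿ with Milnor number μ₀(h) = (d−1)·μ₀(g). -/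
set_option maxHeartbeats 1000000
set_option synthInstance.maxHeartbeats 400000

open MvPolynomial

/-- The maximal ideal of `ℂ[x₁,…,x_k]` corresponding to the origin (kernel of evaluation
at `0`). -/
noncomputable def originIdeal (k : ℕ) : Ideal (MvPolynomial (Fin k) ℂ) :=
  RingHom.ker (MvPolynomial.aeval (fun _ : Fin k => (0 : ℂ))).toRingHom

instance originIdeal_isPrime (k : ℕ) : (originIdeal k).IsPrime :=
  RingHom.ker_isPrime _

/-- The local ring of `ℂⁿ` at the origin: `ℂ[x₁,…,x_k]_{(x₁,…,x_k)}`. -/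
noncomputable def LocalRingAtOrigin (k : ℕ) : Type :=
  Localization.AtPrime (originIdeal k)

noncomputable instance (k : ℕ) : CommRing (LocalRingAtOrigin k) :=
  inferInstanceAs (CommRing (Localization.AtPrime (originIdeal k)))

noncomputable instance (k : ℕ) : Algebra (MvPolynomial (Fin k) ℂ) (LocalRingAtOrigin k) :=
  inferInstanceAs (Algebra (MvPolynomial (Fin k) ℂ) (Localization.AtPrime (originIdeal k)))

noncomputable instance (k : ℕ) : Algebra ℂ (LocalRingAtOrigin k) :=
  inferInstanceAs (Algebra ℂ (Localization.AtPrime (originIdeal k)))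

/-- The Jacobian ideal of `f`, extended to the local ring at the origin. -/
noncomputable def jacobianIdealAtOrigin {k : ℕ} (f : MvPolynomial (Fin k) ℂ) :
    Ideal (LocalRingAtOrigin k) :=
  (Ideal.span (Set.range fun i : Fin k => pderiv i f)).map
    (algebraMap (MvPolynomial (Fin k) ℂ) (LocalRingAtOrigin k))

/-- The Milnor algebra of `f` at the origin: the quotient of the local ring at the origin
by the Jacobian ideal of `f`. -/
noncomputable def MilnorAlgebra {k : ℕ} (f : MvPolynomial (Fin k) ℂ) : Type :=
  LocalRingAtOrigin k ⧸ jacobianIdealAtOrigin f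

noncomputable instance {k : ℕ} (f : MvPolynomial (Fin k) ℂ) : CommRing (MilnorAlgebra f) :=
  inferInstanceAs (CommRing (LocalRingAtOrigin k ⧸ jacobianIdealAtOrigin f))

noncomputable instance {k : ℕ} (f : MvPolynomial (Fin k) ℂ) : Algebra ℂ (MilnorAlgebra f) :=
  inferInstanceAs (Algebra ℂ (LocalRingAtOrigin k ⧸ jacobianIdealAtOrigin f))

/-- The Milnor number of `f` at the origin: the `ℂ`-dimension of the Milnor algebra. -/
noncomputable def milnorNumber {k : ℕ} (f : MvPolynomial (Fin k) ℂ) : ℕ :=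
  Module.finrank ℂ (MilnorAlgebra f)

-- ======== auxiliary development ========
namespace MilnorTS

instance instTower (k : ℕ) : IsScalarTower ℂ (MvPolynomial (Fin k) ℂ) (LocalRingAtOrigin k) :=
  inferInstanceAs (IsScalarTower ℂ _ (Localization.AtPrime (originIdeal k)))

instance instLoc (k : ℕ) : IsLocalization.AtPrime (LocalRingAtOrigin k) (originIdeal k) :=
  inferInstanceAs (IsLocalization.AtPrime (Localization.AtPrime (originIdeal k)) _)

variable {k : ℕ}

lemma mem_originIdeal_iff {p : MvPolynomial (Fin k) ℂ} :
    p ∈ originIdeal k ↔ aeval (fun _ : Fin k => (0 : ℂ)) p = 0 :=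
  Iff.rfl

/-- The canonical algebra map from the polynomial ring to the Milnor algebra. -/
noncomputable def milnorMk (f : MvPolynomial (Fin k) ℂ) :
    MvPolynomial (Fin k) ℂ →ₐ[ℂ] MilnorAlgebra f :=
  (Ideal.Quotient.mkₐ ℂ (jacobianIdealAtOrigin f)).comp
    (IsScalarTower.toAlgHom ℂ (MvPolynomial (Fin k) ℂ) (LocalRingAtOrigin k))

lemma milnorMk_apply (f p : MvPolynomial (Fin k) ℂ) :
    milnorMk f p =
      Ideal.Quotient.mk (jacobianIdealAtOrigin f)
        (algebraMap (MvPolynomial (Fin k) ℂ) (LocalRingAtOrigin k) p) := rfl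

lemma milnorMk_pderiv (f : MvPolynomial (Fin k) ℂ) (i : Fin k) :
    milnorMk f (pderiv i f) = 0 := by
  rw [milnorMk_apply]
  exact Ideal.Quotient.eq_zero_iff_mem.2 (Ideal.mem_map_of_mem _ (Ideal.subset_span ⟨i, rfl⟩))

lemma isUnit_milnorMk (f : MvPolynomial (Fin k) ℂ) {p : MvPolynomial (Fin k) ℂ}
    (hp : aeval (fun _ : Fin k => (0 : ℂ)) p ≠ 0) : IsUnit (milnorMk f p) := by
  rw [milnorMk_apply]
  refine IsUnit.map _ ?_
  exact (IsLocalization.AtPrime.isUnit_to_map_iff (LocalRingAtOrigin k) (originIdeal k) p).2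
    (fun hm => hp (mem_originIdeal_iff.1 hm))


variable (g : MvPolynomial (Fin k) ℂ) (d : ℕ)

local notation "R1" => MvPolynomial (Fin k) ℂ
local notation "R2" => MvPolynomial (Fin (k+1)) ℂ
local notation "hpoly" => rename (Fin.castSucc) g + X (Fin.last k) ^ d

lemma pderiv_h_castSucc (i : Fin k) :
    pderiv (Fin.castSucc i) (hpoly) = rename Fin.castSucc (pderiv i g) := by
  rw [map_add, pderiv_rename (Fin.castSucc_injective k), pderiv_pow,
    pderiv_X_of_ne (Fin.castSucc_lt_last i).ne', mul_zero, add_zero]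

lemma pderiv_h_last :
    pderiv (Fin.last k) (hpoly) = (d : MvPolynomial (Fin (k+1)) ℂ) * X (Fin.last k) ^ (d-1) := by
  rw [map_add, pderiv_pow, pderiv_X_self, mul_one,
    pderiv_eq_zero_of_notMem_vars, zero_add]
  intro hv
  obtain ⟨j, -, hj⟩ := mem_vars_rename _ _ hv
  exact (Fin.castSucc_lt_last j).ne hj


lemma aeval_of_milnorMk (p : MvPolynomial (Fin k) ℂ) :
    aeval (fun j : Fin k => AdjoinRoot.of ((Polynomial.X : Polynomial (MilnorAlgebra g)) ^ (d-1))
        (milnorMk g (X j))) p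
      = AdjoinRoot.of _ (milnorMk g p) := by
  have : aeval (fun j : Fin k => AdjoinRoot.of ((Polynomial.X : Polynomial (MilnorAlgebra g)) ^ (d-1))
        (milnorMk g (X j)))
      = ((IsScalarTower.toAlgHom ℂ (MilnorAlgebra g)
          (AdjoinRoot ((Polynomial.X : Polynomial (MilnorAlgebra g)) ^ (d-1)))).comp
        (milnorMk g)) := by
    apply MvPolynomial.algHom_ext
    intro j
    simp [AdjoinRoot.algebraMap_eq]
  rw [this]
  simp [AdjoinRoot.algebraMap_eq]

lemma key (hd : 2 ≤ d) :
    Nonempty ((MilnorAlgebra (rename (Fin.castSucc) g + X (Fin.last k) ^ d)) ≃ₐ[ℂ]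
      AdjoinRoot ((Polynomial.X : Polynomial (MilnorAlgebra g)) ^ (d-1))) := by
  have hd1 : d - 1 ≠ 0 := by omega
  have hdC : (d : ℂ) ≠ 0 := Nat.cast_ne_zero.2 (by omega)
  set h : MvPolynomial (Fin (k+1)) ℂ := rename (Fin.castSucc) g + X (Fin.last k) ^ d with hh
  set C := AdjoinRoot ((Polynomial.X : Polynomial (MilnorAlgebra g)) ^ (d-1)) with hCdef
  have hroot : (AdjoinRoot.root _ : C) ^ (d-1) = 0 := by
    rw [← AdjoinRoot.mk_X, ← map_pow, AdjoinRoot.mk_self]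
  -- the forward polynomial-level map
  set v : Fin (k+1) → C := Fin.lastCases (AdjoinRoot.root _)
      (fun i => AdjoinRoot.of _ (milnorMk g (X i))) with hv
  set F : MvPolynomial (Fin (k+1)) ℂ →ₐ[ℂ] C := aeval v with hF
  have hFlast : F (X (Fin.last k)) = AdjoinRoot.root _ := by
    simp [hF, hv]
  have hFcast : ∀ i : Fin k, F (X (Fin.castSucc i)) = AdjoinRoot.of _ (milnorMk g (X i)) := by
    intro i; simp [hF, hv]
  -- evaluation of C at the root being zero
  set ε : C →ₐ[ℂ] MilnorAlgebra g :=
    (AdjoinRoot.liftAlgHom _ (Algebra.ofId (MilnorAlgebra g) (MilnorAlgebra g)) (0 : MilnorAlgebra g) (by simp [hd1])).restrictScalars ℂ with hεdef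
  have hεof : ∀ b : MilnorAlgebra g, ε (AdjoinRoot.of _ b) = b := by
    intro b
    exact AdjoinRoot.liftAlgHom_of (p := (Polynomial.X : Polynomial (MilnorAlgebra g)) ^ (d-1))
      (i := Algebra.ofId (MilnorAlgebra g) (MilnorAlgebra g))
      (x := (0 : MilnorAlgebra g)) (h := by simp [hd1]) (r := b)
  have hεroot : ε (AdjoinRoot.root _) = 0 := by
    exact AdjoinRoot.liftAlgHom_root (p := (Polynomial.X : Polynomial (MilnorAlgebra g)) ^ (d-1))
      (i := Algebra.ofId (MilnorAlgebra g) (MilnorAlgebra g))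
      (x := (0 : MilnorAlgebra g)) (h := by simp [hd1])
  -- units in C are detected by ε
  have unitC : ∀ x : C, IsUnit (ε x) → IsUnit x := by
    intro x hx
    obtain ⟨p, rfl⟩ := AdjoinRoot.mk_surjective x
    have hev : ε (AdjoinRoot.mk _ p) = p.eval 0 := by
      rw [hεdef]
      show AdjoinRoot.lift (algebraMap (MilnorAlgebra g) (MilnorAlgebra g)) (0 : MilnorAlgebra g)
        (by rw [Polynomial.eval₂_X_pow]; exact zero_pow hd1) (AdjoinRoot.mk _ p) = _
      rw [AdjoinRoot.lift_mk, Polynomial.eval₂_at_zero]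
      simp [Polynomial.coeff_zero_eq_eval_zero]
    rw [hev] at hx
    obtain ⟨r, hr⟩ : (Polynomial.X : Polynomial (MilnorAlgebra g)) ∣ (p - Polynomial.C (p.eval 0)) := by
      rw [Polynomial.X_dvd_iff]
      simp [Polynomial.coeff_zero_eq_eval_zero]
    have hsplit : AdjoinRoot.mk ((Polynomial.X : Polynomial (MilnorAlgebra g)) ^ (d-1)) p
        = AdjoinRoot.of ((Polynomial.X : Polynomial (MilnorAlgebra g)) ^ (d-1)) (p.eval 0)
          + AdjoinRoot.root ((Polynomial.X : Polynomial (MilnorAlgebra g)) ^ (d-1))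
            * AdjoinRoot.mk ((Polynomial.X : Polynomial (MilnorAlgebra g)) ^ (d-1)) r := by
      have := congrArg (AdjoinRoot.mk ((Polynomial.X : Polynomial (MilnorAlgebra g)) ^ (d-1))) hr
      rw [map_sub, map_mul, AdjoinRoot.mk_X] at this
      rw [sub_eq_iff_eq_add] at this
      rw [this]
      rw [add_comm]
      rfl
    rw [hsplit]
    have hnil : IsNilpotent (AdjoinRoot.root ((Polynomial.X : Polynomial (MilnorAlgebra g)) ^ (d-1))
        * AdjoinRoot.mk _ r) := by
      exact ⟨d - 1, by rw [mul_pow, hroot, zero_mul]⟩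
    exact hnil.isUnit_add_left_of_commute (hx.map (AdjoinRoot.of _)) (Commute.all _ _)
  -- ε ∘ F computes as evaluation with last variable set to 0
  have hεF : ∀ p : MvPolynomial (Fin (k+1)) ℂ,
      ε (F p) = milnorMk g (aeval (Fin.lastCases 0 X) p) := by
    have : ε.comp F = (milnorMk g).comp (aeval (Fin.lastCases 0 X)) := by
      apply MvPolynomial.algHom_ext
      intro i
      induction i using Fin.lastCases with
      | last => simp [hFlast, hεroot]
      | cast j => simp [hFcast, hεof]
    intro p
    exact DFunLike.congr_fun this p
  -- units condition for the forward map
  have hFunit : ∀ y : (originIdeal (k+1)).primeCompl, IsUnit (F y) := by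
    rintro ⟨y, hy⟩
    refine unitC _ ?_
    rw [hεF]
    refine isUnit_milnorMk g ?_
    have hcomp : (aeval (fun _ : Fin k => (0:ℂ))).comp (aeval (Fin.lastCases 0 X :
        Fin (k+1) → MvPolynomial (Fin k) ℂ)) = aeval (fun _ : Fin (k+1) => (0:ℂ)) := by
      apply MvPolynomial.algHom_ext
      intro i
      induction i using Fin.lastCases with
      | last => simp
      | cast j => simp
    have := DFunLike.congr_fun hcomp y
    simp only [AlgHom.coe_comp, Function.comp_apply] at this
    rw [this]
    exact fun h0 => hy (mem_originIdeal_iff.2 h0)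
  -- the induced map on the local ring
  set Φ : LocalRingAtOrigin (k+1) →ₐ[ℂ] C :=
    IsLocalization.liftAlgHom (M := (originIdeal (k+1)).primeCompl) hFunit with hΦdef
  have hΦa : ∀ p : MvPolynomial (Fin (k+1)) ℂ,
      Φ (algebraMap (MvPolynomial (Fin (k+1)) ℂ) (LocalRingAtOrigin (k+1)) p) = F p := by
    intro p
    rw [hΦdef, IsLocalization.liftAlgHom_apply, IsLocalization.lift_eq]
    rfl
  -- Φ kills the jacobian ideal of h
  have hker : ∀ a ∈ jacobianIdealAtOrigin h, Φ a = 0 := by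
    have hle : jacobianIdealAtOrigin h ≤ RingHom.ker Φ.toRingHom := by
      rw [jacobianIdealAtOrigin, Ideal.map_le_iff_le_comap, Ideal.span_le]
      rintro _ ⟨i, rfl⟩
      simp only [Ideal.mem_comap, RingHom.mem_ker, SetLike.mem_coe]
      show Φ (algebraMap _ _ (pderiv i h)) = 0
      rw [hΦa]
      induction i using Fin.lastCases with
      | last =>
          rw [pderiv_h_last, map_mul, map_pow, map_natCast, hFlast, hroot, mul_zero]
      | cast j =>
          rw [pderiv_h_castSucc]
          rw [hF]
          rw [aeval_rename]
          have : (v ∘ Fin.castSucc)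
              = fun i : Fin k => AdjoinRoot.of ((Polynomial.X : Polynomial (MilnorAlgebra g))
                  ^ (d-1)) (milnorMk g (X i)) := by
            funext i; simp [hv]
          rw [this, aeval_of_milnorMk, milnorMk_pderiv, map_zero]
    exact fun a ha => hle ha
  set Φb : MilnorAlgebra h →ₐ[ℂ] C := Ideal.Quotient.liftₐ _ Φ hker with hΦbdef
  have hΦb : ∀ p : MvPolynomial (Fin (k+1)) ℂ, Φb (milnorMk h p) = F p := by
    intro p
    have h2 := DFunLike.congr_fun (Ideal.Quotient.liftₐ_comp (jacobianIdealAtOrigin h) Φ hker)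
      (algebraMap (MvPolynomial (Fin (k+1)) ℂ) (LocalRingAtOrigin (k+1)) p)
    simp only [AlgHom.coe_comp, Function.comp_apply, Ideal.Quotient.mkₐ_eq_mk] at h2
    rw [milnorMk_apply, hΦbdef]
    exact h2.trans (hΦa p)
  -- backward map
  set ψ : MvPolynomial (Fin k) ℂ →ₐ[ℂ] MilnorAlgebra h :=
    (milnorMk h).comp (rename (Fin.castSucc)) with hψdef
  have hψ : ∀ p : MvPolynomial (Fin k) ℂ, ψ p = milnorMk h (rename Fin.castSucc p) :=
    fun p => rfl
  have hψunit : ∀ y : (originIdeal k).primeCompl, IsUnit (ψ y) := by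
    rintro ⟨y, hy⟩
    refine isUnit_milnorMk h ?_
    show (aeval (fun _ : Fin (k+1) => (0:ℂ))) (rename Fin.castSucc y) ≠ 0
    rw [aeval_rename]
    have : ((fun _ : Fin (k+1) => (0:ℂ)) ∘ Fin.castSucc) = fun _ : Fin k => (0:ℂ) := rfl
    rw [this]
    exact fun h0 => hy (mem_originIdeal_iff.2 h0)
  set Ψ : LocalRingAtOrigin k →ₐ[ℂ] MilnorAlgebra h :=
    IsLocalization.liftAlgHom (M := (originIdeal k).primeCompl) hψunit with hΨdef
  have hΨa : ∀ p : MvPolynomial (Fin k) ℂ,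
      Ψ (algebraMap (MvPolynomial (Fin k) ℂ) (LocalRingAtOrigin k) p)
        = milnorMk h (rename Fin.castSucc p) := by
    intro p
    rw [hΨdef, IsLocalization.liftAlgHom_apply, IsLocalization.lift_eq]
    rfl
  have hΨker : ∀ a ∈ jacobianIdealAtOrigin g, Ψ a = 0 := by
    have hle : jacobianIdealAtOrigin g ≤ RingHom.ker Ψ.toRingHom := by
      rw [jacobianIdealAtOrigin, Ideal.map_le_iff_le_comap, Ideal.span_le]
      rintro _ ⟨i, rfl⟩
      simp only [Ideal.mem_comap, RingHom.mem_ker, SetLike.mem_coe]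
      show Ψ (algebraMap _ _ (pderiv i g)) = 0
      rw [hΨa, ← pderiv_h_castSucc, milnorMk_pderiv]
    exact fun a ha => hle ha
  set Ψb : MilnorAlgebra g →ₐ[ℂ] MilnorAlgebra h := Ideal.Quotient.liftₐ _ Ψ hΨker with hΨbdef
  have hΨb : ∀ p : MvPolynomial (Fin k) ℂ,
      Ψb (milnorMk g p) = milnorMk h (rename Fin.castSucc p) := by
    intro p
    have h2 := DFunLike.congr_fun (Ideal.Quotient.liftₐ_comp (jacobianIdealAtOrigin g) Ψ hΨker)
      (algebraMap (MvPolynomial (Fin k) ℂ) (LocalRingAtOrigin k) p)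
    simp only [AlgHom.coe_comp, Function.comp_apply, Ideal.Quotient.mkₐ_eq_mk] at h2
    rw [milnorMk_apply, hΨbdef]
    exact h2.trans (hΨa p)
  -- the image of the last variable
  set t : MilnorAlgebra h := milnorMk h (X (Fin.last k)) with htdef
  have hXpow : (X (Fin.last k) : MvPolynomial (Fin (k+1)) ℂ) ^ (d-1)
      = MvPolynomial.C ((d:ℂ)⁻¹) * pderiv (Fin.last k) h := by
    rw [pderiv_h_last]
    rw [← mul_assoc]
    have : (MvPolynomial.C ((d:ℂ)⁻¹) * (d : MvPolynomial (Fin (k+1)) ℂ))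
        = 1 := by
      rw [← MvPolynomial.C_eq_coe_nat]
      rw [← map_mul, inv_mul_cancel₀ hdC, map_one]
    rw [this, one_mul]
  have ht : t ^ (d-1) = 0 := by
    rw [htdef, ← map_pow, hXpow, map_mul, milnorMk_pderiv, mul_zero]
  have hcond : Polynomial.eval₂ (Ψb.toRingHom) t
      ((Polynomial.X : Polynomial (MilnorAlgebra g)) ^ (d-1)) = 0 := by
    rw [Polynomial.eval₂_X_pow, ht]
  set Θ₀ : C →+* MilnorAlgebra h := AdjoinRoot.lift Ψb.toRingHom t hcond with hΘ₀def
  have hΘof : ∀ b : MilnorAlgebra g, Θ₀ (AdjoinRoot.of _ b) = Ψb b := fun b =>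
    AdjoinRoot.lift_of hcond
  have hΘroot : Θ₀ (AdjoinRoot.root _) = t := AdjoinRoot.lift_root hcond
  set Θ : C →ₐ[ℂ] MilnorAlgebra h :=
    { toRingHom := Θ₀, commutes' := by
        intro a
        have h1 : (algebraMap ℂ C) a = AdjoinRoot.of _ (algebraMap ℂ (MilnorAlgebra g) a) := by
          rw [IsScalarTower.algebraMap_apply ℂ (MilnorAlgebra g) C, AdjoinRoot.algebraMap_eq]
        show Θ₀ (algebraMap ℂ C a) = algebraMap ℂ (MilnorAlgebra h) a
        rw [h1, hΘof, AlgHom.commutes] } with hΘdef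
  have hΘap : ∀ x : C, Θ x = Θ₀ x := fun x => rfl
  -- first composite identity
  have comp1 : Θ.comp Φb = AlgHom.id ℂ (MilnorAlgebra h) := by
    have hring : (Θ.comp Φb).toRingHom = (AlgHom.id ℂ (MilnorAlgebra h)).toRingHom := by
      apply Ideal.Quotient.ringHom_ext
      apply IsLocalization.ringHom_ext (originIdeal (k+1)).primeCompl
      apply MvPolynomial.ringHom_ext
      · intro a
        show Θ (Φb (milnorMk h (MvPolynomial.C a))) = milnorMk h (MvPolynomial.C a)
        have hCa : (MvPolynomial.C a : MvPolynomial (Fin (k+1)) ℂ)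
            = algebraMap ℂ (MvPolynomial (Fin (k+1)) ℂ) a := rfl
        rw [hCa, (milnorMk h).commutes, Φb.commutes, Θ.commutes]
      · intro i
        show Θ (Φb (milnorMk h (X i))) = milnorMk h (X i)
        rw [hΦb]
        induction i using Fin.lastCases with
        | last => rw [hFlast, hΘap, hΘroot]
        | cast j => rw [hFcast, hΘap, hΘof, hΨb, rename_X]
    exact AlgHom.ext fun x => RingHom.congr_fun hring x
  -- second composite identity
  have comp2 : Φb.comp Θ = AlgHom.id ℂ C := by
    have hring : (Φb.comp Θ).toRingHom = (AlgHom.id ℂ C).toRingHom := by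
      apply Ideal.Quotient.ringHom_ext
      apply Polynomial.ringHom_ext'
      · apply Ideal.Quotient.ringHom_ext
        apply IsLocalization.ringHom_ext (originIdeal k).primeCompl
        apply MvPolynomial.ringHom_ext
        · intro a
          show Φb (Θ (AdjoinRoot.of ((Polynomial.X : Polynomial (MilnorAlgebra g)) ^ (d-1))
              (milnorMk g (MvPolynomial.C a))))
            = AdjoinRoot.of ((Polynomial.X : Polynomial (MilnorAlgebra g)) ^ (d-1))
              (milnorMk g (MvPolynomial.C a))
          have hCa : (MvPolynomial.C a : MvPolynomial (Fin k) ℂ)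
              = algebraMap ℂ (MvPolynomial (Fin k) ℂ) a := rfl
          have hofa : AdjoinRoot.of ((Polynomial.X : Polynomial (MilnorAlgebra g)) ^ (d-1))
              (algebraMap ℂ (MilnorAlgebra g) a) = algebraMap ℂ C a := by
            rw [IsScalarTower.algebraMap_apply ℂ (MilnorAlgebra g) C, AdjoinRoot.algebraMap_eq]
          rw [hCa, (milnorMk g).commutes, hofa, Θ.commutes, Φb.commutes]
        · intro j
          show Φb (Θ (AdjoinRoot.of ((Polynomial.X : Polynomial (MilnorAlgebra g)) ^ (d-1))
              (milnorMk g (X j))))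
            = AdjoinRoot.of ((Polynomial.X : Polynomial (MilnorAlgebra g)) ^ (d-1))
              (milnorMk g (X j))
          rw [hΘap, hΘof, hΨb, rename_X, hΦb, hFcast]
      · show Φb (Θ (AdjoinRoot.root ((Polynomial.X : Polynomial (MilnorAlgebra g)) ^ (d-1))))
          = AdjoinRoot.root ((Polynomial.X : Polynomial (MilnorAlgebra g)) ^ (d-1))
        rw [hΘap, hΘroot, htdef, hΦb, hFlast]
    exact AlgHom.ext fun x => RingHom.congr_fun hring x
  exact ⟨AlgEquiv.ofAlgHom Φb Θ comp2 comp1⟩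

lemma nontrivial_milnor (hgsing : ∀ i : Fin k,
      MvPolynomial.aeval (fun _ : Fin k => (0 : ℂ)) (pderiv i g) = 0) :
    Nontrivial (MilnorAlgebra g) := by
  set F0 : MvPolynomial (Fin k) ℂ →ₐ[ℂ] ℂ := aeval (fun _ => 0) with hF0
  have hunit : ∀ y : (originIdeal k).primeCompl, IsUnit (F0 y) := by
    rintro ⟨y, hy⟩
    exact isUnit_iff_ne_zero.2 (fun h0 => hy (mem_originIdeal_iff.2 h0))
  set χL : LocalRingAtOrigin k →ₐ[ℂ] ℂ :=
    IsLocalization.liftAlgHom (M := (originIdeal k).primeCompl) hunit with hχL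
  have hχa : ∀ p : MvPolynomial (Fin k) ℂ,
      χL (algebraMap (MvPolynomial (Fin k) ℂ) (LocalRingAtOrigin k) p) = F0 p := by
    intro p
    rw [hχL, IsLocalization.liftAlgHom_apply, IsLocalization.lift_eq]
    rfl
  have hker : ∀ a ∈ jacobianIdealAtOrigin g, χL a = 0 := by
    have hle : jacobianIdealAtOrigin g ≤ RingHom.ker χL.toRingHom := by
      rw [jacobianIdealAtOrigin, Ideal.map_le_iff_le_comap, Ideal.span_le]
      rintro _ ⟨i, rfl⟩
      simp only [Ideal.mem_comap, RingHom.mem_ker, SetLike.mem_coe]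
      show χL (algebraMap _ _ (pderiv i g)) = 0
      rw [hχa]
      exact hgsing i
    exact fun a ha => hle ha
  set χ : MilnorAlgebra g →ₐ[ℂ] ℂ := Ideal.Quotient.liftₐ _ χL hker with hχ
  refine nontrivial_of_ne 1 0 (fun h10 => ?_)
  have := congrArg χ h10
  rw [map_one, map_zero] at this
  exact one_ne_zero this

end MilnorTS

/-- **Thom–Sebastiani for adding a power of a new variable.**
Let `n = k + 1 ≥ 2` and let `g ∈ ℂ[x₁,…,x_k]` have an isolated singularity at the origin
(it vanishes together with all its partial derivatives at `0`, and its Milnor algebra is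
finite dimensional, with Milnor number `μ₀(g)`).  Then for every `d ≥ 2` the polynomial
`h = g(x₁,…,x_k) + x_{k+1}^d` has an isolated singularity at the origin of `ℂ^{k+1}`
with Milnor number `μ₀(h) = (d−1)·μ₀(g)`. -/
theorem milnor_number_add_pow (k : ℕ) (hk : 1 ≤ k) (g : MvPolynomial (Fin k) ℂ)
    (hg0 : MvPolynomial.aeval (fun _ : Fin k => (0 : ℂ)) g = 0)
    (hgsing : ∀ i : Fin k, MvPolynomial.aeval (fun _ : Fin k => (0 : ℂ)) (pderiv i g) = 0)
    (hfin : FiniteDimensional ℂ (MilnorAlgebra g))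
    (d : ℕ) (hd : 2 ≤ d) :
    FiniteDimensional ℂ
        (MilnorAlgebra (rename (Fin.castSucc) g + X (Fin.last k) ^ d)) ∧
      milnorNumber (rename (Fin.castSucc) g + X (Fin.last k) ^ d) =
        (d - 1) * milnorNumber g := by
  obtain ⟨e⟩ := MilnorTS.key g d hd
  have hnt : Nontrivial (MilnorAlgebra g) := MilnorTS.nontrivial_milnor g hgsing
  have hmonic : ((Polynomial.X : Polynomial (MilnorAlgebra g)) ^ (d - 1)).Monic :=
    Polynomial.monic_X_pow _
  let pb := AdjoinRoot.powerBasis' hmonic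
  have hfree : Module.Free (MilnorAlgebra g)
      (AdjoinRoot ((Polynomial.X : Polynomial (MilnorAlgebra g)) ^ (d - 1))) :=
    Module.Free.of_basis pb.basis
  have hfinBC : Module.Finite (MilnorAlgebra g)
      (AdjoinRoot ((Polynomial.X : Polynomial (MilnorAlgebra g)) ^ (d - 1))) :=
    Module.Finite.of_basis pb.basis
  have hfinC : Module.Finite ℂ
      (AdjoinRoot ((Polynomial.X : Polynomial (MilnorAlgebra g)) ^ (d - 1))) :=
    Module.Finite.trans (MilnorAlgebra g) _
  constructor
  · exact Module.Finite.equiv e.symm.toLinearEquiv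
  · have h1 : milnorNumber (rename (Fin.castSucc) g + X (Fin.last k) ^ d)
        = Module.finrank ℂ
            (AdjoinRoot ((Polynomial.X : Polynomial (MilnorAlgebra g)) ^ (d - 1))) :=
      e.toLinearEquiv.finrank_eq
    have h2 : Module.finrank ℂ (MilnorAlgebra g)
          * Module.finrank (MilnorAlgebra g)
            (AdjoinRoot ((Polynomial.X : Polynomial (MilnorAlgebra g)) ^ (d - 1)))
        = Module.finrank ℂ
            (AdjoinRoot ((Polynomial.X : Polynomial (MilnorAlgebra g)) ^ (d - 1))) :=
      Module.finrank_mul_finrank ℂ _ _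
    have h3 : Module.finrank (MilnorAlgebra g)
        (AdjoinRoot ((Polynomial.X : Polynomial (MilnorAlgebra g)) ^ (d - 1))) = d - 1 := by
      rw [pb.finrank]
      show ((Polynomial.X : Polynomial (MilnorAlgebra g)) ^ (d - 1)).natDegree = d - 1
      exact Polynomial.natDegree_X_pow _
    rw [h1, ← h2, h3, mul_comm]
    rfl
end

section
/- Let (R, 𝔪) be a Noetherian local ring and I ⊆ J two 𝔪-primary ideals of R. If I and J have the same integral closure, then e(I; R) = e(J; R). -/
open IsLocalRing

/-- The length of the `R`-module `R ⧸ I`, as the Krull dimension (longest chain) of the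
lattice of submodules. -/
noncomputable def quotLength (R : Type*) [CommRing R] (I : Ideal R) : WithBot ℕ∞ :=
  Order.krullDim (Submodule R (R ⧸ I))

/-- `e` is the Hilbert–Samuel multiplicity of the ideal `I` in the `d`-dimensional
local ring `R`:  `ℓ(R/I^m) · d! / m^d → e` as `m → ∞`. -/
def IsHSMultiplicity (R : Type*) [CommRing R] (I : Ideal R) (d : ℕ) (e : ℕ) : Prop :=
  Filter.Tendsto
    (fun m : ℕ => (WithBot.unbotD 0 (quotLength R (I ^ m))).toNat * (Nat.factorial d) / (m : ℝ) ^ d)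
    Filter.atTop (nhds (e : ℝ))

/-- `x` is integral over the ideal `I`: there is an equation
`xⁿ + a₁ x^{n−1} + ⋯ + aₙ = 0` with `aᵢ ∈ Iⁱ`. -/
def IsIntegralOverIdeal {R : Type*} [CommRing R] (I : Ideal R) (x : R) : Prop :=
  ∃ n : ℕ, 0 < n ∧ ∃ a : Fin n → R, (∀ i : Fin n, a i ∈ I ^ ((i : ℕ) + 1)) ∧
    x ^ n + ∑ i : Fin n, a i * x ^ (n - 1 - (i : ℕ)) = 0

section Aux

variable {R : Type*} [CommRing R]

/-- A single term of a finite sum of ideals is `≤` the sum. -/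
lemma aux_ideal_le_sum {ι : Type*} [DecidableEq ι] {s : Finset ι} {f : ι → Ideal R} {j : ι}
    (hj : j ∈ s) : f j ≤ ∑ i ∈ s, f i := by
  rw [← Finset.add_sum_erase _ f hj, Submodule.add_eq_sup]
  exact le_sup_left

/-- A finite sum of ideals is `≤ T` if each summand is. -/
lemma aux_ideal_sum_le {ι : Type*} {s : Finset ι} {f : ι → Ideal R} {T : Ideal R}
    (h : ∀ i ∈ s, f i ≤ T) : ∑ i ∈ s, f i ≤ T := by
  classical
  induction s using Finset.induction_on with
  | empty => simpa using bot_le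
  | insert _ _ hx ih =>
    rw [Finset.sum_insert hx, Submodule.add_eq_sup]
    exact sup_le (h _ (Finset.mem_insert_self _ _))
      (ih fun i hi => h _ (Finset.mem_insert_of_mem hi))

/-- Binomial inequality for ideals. -/
lemma aux_add_pow_le (A B : Ideal R) (e : ℕ) :
    (A + B) ^ e ≤ ∑ i ∈ Finset.range (e + 1), A ^ i * B ^ (e - i) := by
  induction e with
  | zero => simp
  | succ e ih =>
    calc (A + B) ^ (e + 1) = (A + B) ^ e * (A + B) := pow_succ _ _
    _ ≤ (∑ i ∈ Finset.range (e + 1), A ^ i * B ^ (e - i)) * (A + B) :=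
        Ideal.mul_mono ih le_rfl
    _ = (∑ i ∈ Finset.range (e + 1), A ^ i * B ^ (e - i) * A)
        + ∑ i ∈ Finset.range (e + 1), A ^ i * B ^ (e - i) * B := by
        rw [mul_add, Finset.sum_mul, Finset.sum_mul]
    _ ≤ ∑ i ∈ Finset.range (e + 2), A ^ i * B ^ (e + 1 - i) := by
        rw [Submodule.add_eq_sup]
        apply sup_le
        · apply aux_ideal_sum_le
          intro i hi
          have h1 : A ^ i * B ^ (e - i) * A = A ^ (i + 1) * B ^ (e + 1 - (i + 1)) := by
            rw [mul_right_comm, ← pow_succ, Nat.succ_sub_succ]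
          rw [h1]
          exact aux_ideal_le_sum (f := fun j => A ^ j * B ^ (e + 1 - j)) (j := i + 1)
            (by simp only [Finset.mem_range] at hi ⊢; omega)
        · apply aux_ideal_sum_le
          intro i hi
          simp only [Finset.mem_range] at hi
          have h1 : A ^ i * B ^ (e - i) * B = A ^ i * B ^ (e + 1 - i) := by
            rw [mul_assoc, ← pow_succ]
            congr 2
            omega
          rw [h1]
          exact aux_ideal_le_sum (f := fun j => A ^ j * B ^ (e + 1 - j)) (j := i)
            (by simp only [Finset.mem_range]; omega)

/-- If `x` is integral over `I` then the powers of `x` fall into powers of `I`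
with a uniform shift. -/
lemma aux_pow_mem_of_integral {I : Ideal R} {x : R} (hx : IsIntegralOverIdeal I x) :
    ∃ c : ℕ, ∀ e : ℕ, x ^ e ∈ I ^ (e - c) := by
  classical
  obtain ⟨n, hn, a, ha, heq⟩ := hx
  refine ⟨n - 1, ?_⟩
  set S : ℕ → Ideal R := fun e => ∑ j ∈ Finset.range n, I ^ (e - j) * Ideal.span {x ^ j} with hS
  have key : ∀ e, x ^ e ∈ S e := by
    intro e
    induction e using Nat.strong_induction_on with
    | _ e ih =>
      by_cases hcase : e < n
      · have hmem : x ^ e ∈ I ^ (e - e) * Ideal.span {x ^ e} := by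
          rw [Nat.sub_self, pow_zero, Ideal.one_eq_top, Ideal.top_mul]
          exact Ideal.mem_span_singleton_self _
        exact aux_ideal_le_sum (f := fun j => I ^ (e - j) * Ideal.span {x ^ j})
          (Finset.mem_range.mpr hcase) hmem
      · push_neg at hcase
        have hxe : x ^ e = -∑ i : Fin n, a i * x ^ (e - 1 - (i : ℕ)) := by
          have h1 : x ^ e = x ^ (e - n) * x ^ n := by
            rw [← pow_add]; congr 1; omega
          have h2 : x ^ n = -∑ i : Fin n, a i * x ^ (n - 1 - (i : ℕ)) :=
            eq_neg_of_add_eq_zero_left heq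
          rw [h1, h2, mul_neg, Finset.mul_sum]
          congr 1
          refine Finset.sum_congr rfl fun i _ => ?_
          have hi : (i : ℕ) < n := i.2
          rw [mul_left_comm, ← pow_add]
          congr 2
          omega
        rw [hxe]
        refine neg_mem ?_
        refine Submodule.sum_mem _ fun i _ => ?_
        have hi : (i : ℕ) < n := i.2
        have hxi : x ^ (e - 1 - (i : ℕ)) ∈ S (e - 1 - (i : ℕ)) := ih _ (by omega)
        have hmul : a i * x ^ (e - 1 - (i : ℕ)) ∈ I ^ ((i : ℕ) + 1) * S (e - 1 - (i : ℕ)) :=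
          Ideal.mul_mem_mul (ha i) hxi
        refine (?_ : I ^ ((i : ℕ) + 1) * S (e - 1 - (i : ℕ)) ≤ S e) hmul
        rw [hS]
        simp only
        rw [Finset.mul_sum]
        apply aux_ideal_sum_le
        intro j hj
        refine le_trans ?_ (aux_ideal_le_sum (f := fun j => I ^ (e - j) * Ideal.span {x ^ j}) hj)
        simp only [Finset.mem_range] at hj
        rw [← mul_assoc, ← pow_add]
        exact Ideal.mul_mono (Ideal.pow_le_pow_right (by omega)) le_rfl
  intro e
  refine (?_ : S e ≤ I ^ (e - (n - 1))) (key e)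
  apply aux_ideal_sum_le
  intro j hj
  simp only [Finset.mem_range] at hj
  exact le_trans Ideal.mul_le_left (Ideal.pow_le_pow_right (show e - (n - 1) ≤ e - j by omega))

/-- Every element of an ideal is integral over it. -/
lemma aux_isIntegral_self {J : Ideal R} {x : R} (hx : x ∈ J) : IsIntegralOverIdeal J x := by
  refine ⟨1, one_pos, fun _ => -x, fun i => ?_, ?_⟩
  · simpa using J.neg_mem hx
  · simp

/-- If every generator power falls into shifted powers of `I`, so do powers of the span. -/
lemma aux_span_pow_le {I : Ideal R} (s : Finset R)
    (h : ∀ x ∈ s, ∃ c : ℕ, ∀ e : ℕ, x ^ e ∈ I ^ (e - c)) :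
    ∃ c : ℕ, ∀ e : ℕ, (Ideal.span (s : Set R)) ^ e ≤ I ^ (e - c) := by
  classical
  induction s using Finset.induction_on with
  | empty =>
    refine ⟨0, fun e => ?_⟩
    match e with
    | 0 => simp
    | (e + 1) =>
      rw [Finset.coe_empty, Ideal.span_empty]
      calc (⊥ : Ideal R) ^ (e + 1) ≤ ⊥ := by
            rw [← Ideal.zero_eq_bot, zero_pow (Nat.succ_ne_zero e)]
      _ ≤ _ := bot_le
  | @insert x s hx ih =>
    obtain ⟨c₁, h₁⟩ := h x (Finset.mem_insert_self _ _)
    obtain ⟨c₂, h₂⟩ := ih fun y hy => h y (Finset.mem_insert_of_mem hy)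
    refine ⟨c₁ + c₂, fun e => ?_⟩
    rw [Finset.coe_insert, Ideal.span_insert, ← Submodule.add_eq_sup]
    refine le_trans (aux_add_pow_le _ _ e) (aux_ideal_sum_le fun i hi => ?_)
    simp only [Finset.mem_range] at hi
    have hxi : Ideal.span {x} ^ i ≤ I ^ (i - c₁) := by
      rw [Ideal.span_singleton_pow, Ideal.span_le, Set.singleton_subset_iff]
      exact h₁ i
    calc Ideal.span {x} ^ i * Ideal.span (s : Set R) ^ (e - i)
        ≤ I ^ (i - c₁) * I ^ ((e - i) - c₂) := Ideal.mul_mono hxi (h₂ _)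
    _ = I ^ ((i - c₁) + ((e - i) - c₂)) := (pow_add _ _ _).symm
    _ ≤ I ^ (e - (c₁ + c₂)) := Ideal.pow_le_pow_right (by omega)

/-- Antitonicity of `quotLength`. -/
lemma aux_quotLength_anti {K K' : Ideal R} (h : K ≤ K') :
    quotLength R K' ≤ quotLength R K := by
  let f : (R ⧸ K) →ₗ[R] (R ⧸ K') :=
    Submodule.mapQ K K' LinearMap.id (fun x hx => h hx)
  have hsurj : Function.Surjective f := by
    intro y
    obtain ⟨z, rfl⟩ := Submodule.Quotient.mk_surjective K' y
    exact ⟨Submodule.Quotient.mk z, rfl⟩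
  exact Order.krullDim_le_of_strictMono (Submodule.comap f)
    (Submodule.comap_strictMono_of_surjective hsurj)

lemma aux_toNat_mono {a b : WithBot ℕ∞} (hab : a ≤ b) (hb : b ≠ (⊤ : WithBot ℕ∞)) :
    (WithBot.unbotD 0 a).toNat ≤ (WithBot.unbotD 0 b).toNat := by
  cases a with
  | bot => simp
  | coe p =>
    cases b with
    | bot => exact absurd hab (by simp)
    | coe q =>
      simp only [WithBot.unbotD_coe]
      refine ENat.toNat_le_toNat (WithBot.coe_le_coe.mp hab) ?_
      intro hq
      exact hb (by rw [hq, WithBot.coe_top])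

lemma aux_div_mono {a b : ℕ} (h : a ≤ b) (c : ℝ) (hc : 0 ≤ c) (e : ℝ) (he : 0 ≤ e) :
    (a : ℝ) * c / e ≤ (b : ℝ) * c / e := by
  rw [div_eq_mul_inv, div_eq_mul_inv]
  exact mul_le_mul_of_nonneg_right
    (mul_le_mul_of_nonneg_right (Nat.cast_le.mpr h) hc) (inv_nonneg.mpr he)

lemma aux_top_toNat : (WithBot.unbotD 0 (⊤ : WithBot ℕ∞)).toNat = 0 := rfl

end Aux

/-- **Rees's theorem (easy direction).** -/
theorem hs_multiplicity_eq_of_integral_closure_eq {R : Type*} [CommRing R] [IsLocalRing R]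
    [IsNoetherianRing R] (d : ℕ) (hdim : ringKrullDim R = d)
    (I J : Ideal R) (hIJ : I ≤ J)
    (hI : I.radical = maximalIdeal R) (hJ : J.radical = maximalIdeal R)
    (hclosure : ∀ x : R, IsIntegralOverIdeal I x ↔ IsIntegralOverIdeal J x)
    (eI eJ : ℕ) (heI : IsHSMultiplicity R I d eI) (heJ : IsHSMultiplicity R J d eJ) :
    eI = eJ := by
  have heI' : Filter.Tendsto
      (fun m : ℕ => (WithBot.unbotD 0 (quotLength R (I ^ m))).toNat * (Nat.factorial d) / (m : ℝ) ^ d)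
      Filter.atTop (nhds (eI : ℝ)) := heI
  have heJ' : Filter.Tendsto
      (fun m : ℕ => (WithBot.unbotD 0 (quotLength R (J ^ m))).toNat * (Nat.factorial d) / (m : ℝ) ^ d)
      Filter.atTop (nhds (eJ : ℝ)) := heJ
  -- reduction : some power shift
  obtain ⟨s, hs⟩ := (IsNoetherian.noetherian J : J.FG)
  have hint : ∀ x ∈ s, ∃ c : ℕ, ∀ e : ℕ, x ^ e ∈ I ^ (e - c) := fun x hx =>
    aux_pow_mem_of_integral ((hclosure x).mpr (aux_isIntegral_self (hs ▸ Ideal.subset_span hx)))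
  obtain ⟨k, hk⟩ := aux_span_pow_le s hint
  have hred : ∀ m : ℕ, J ^ (m + k) ≤ I ^ m := by
    intro m
    have h2 := hk (m + k)
    rw [Nat.add_sub_cancel] at h2
    rw [← hs]
    exact h2
  by_cases hfin : ∀ m : ℕ, quotLength R (J ^ m) ≠ (⊤ : WithBot ℕ∞)
  · -- all lengths finite
    have hfinI : ∀ m : ℕ, quotLength R (I ^ m) ≠ (⊤ : WithBot ℕ∞) := by
      intro m hm
      apply hfin (m + k)
      have h2 := aux_quotLength_anti (hred m)
      rw [hm] at h2
      exact top_le_iff.mp h2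
    -- eJ ≤ eI
    have hmono1 : ∀ m : ℕ,
        ((WithBot.unbotD 0 (quotLength R (J ^ m))).toNat * (Nat.factorial d) : ℝ) / (m : ℝ) ^ d ≤
        ((WithBot.unbotD 0 (quotLength R (I ^ m))).toNat * (Nat.factorial d) : ℝ) / (m : ℝ) ^ d := by
      intro m
      exact aux_div_mono
        (aux_toNat_mono (aux_quotLength_anti (Ideal.pow_right_mono hIJ m)) (hfinI m))
        _ (Nat.cast_nonneg _) _ (pow_nonneg (Nat.cast_nonneg m) d)
    have h1 : (eJ : ℝ) ≤ (eI : ℝ) := le_of_tendsto_of_tendsto' heJ' heI' hmono1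
    -- eI ≤ eJ
    have hshift := heJ'.comp (Filter.tendsto_add_atTop_nat k)
    have hfac : Filter.Tendsto (fun m : ℕ => (1 + (k : ℝ) / m) ^ d)
        Filter.atTop (nhds 1) := by
      have h0 : Filter.Tendsto (fun m : ℕ => 1 + (k : ℝ) / m) Filter.atTop (nhds (1 + 0)) :=
        tendsto_const_nhds.add (tendsto_const_div_atTop_nhds_zero_nat (k : ℝ))
      have h1 := h0.pow d
      norm_num at h1
      exact h1
    have hprod := hshift.mul hfac
    rw [mul_one] at hprod
    have hineq : ∀ᶠ m : ℕ in Filter.atTop,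
        ((WithBot.unbotD 0 (quotLength R (I ^ m))).toNat * (Nat.factorial d) : ℝ) / (m : ℝ) ^ d ≤
        (((WithBot.unbotD 0 (quotLength R (J ^ (m + k)))).toNat * (Nat.factorial d) : ℝ)
          / ((m + k : ℕ) : ℝ) ^ d) * (1 + (k : ℝ) / m) ^ d := by
      filter_upwards [Filter.eventually_ge_atTop 1] with m hm
      have hm' : (0 : ℝ) < (m : ℝ) := by exact_mod_cast hm
      have hmk : (0 : ℝ) < ((m + k : ℕ) : ℝ) := by
        have : 0 < m + k := by omega
        exact_mod_cast this
      have hkey : (1 + (k : ℝ) / m) ^ d = ((m + k : ℕ) : ℝ) ^ d / (m : ℝ) ^ d := by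
        rw [← div_pow]
        congr 1
        push_cast
        field_simp
      rw [hkey, div_mul_div_comm, mul_comm ((((m + k : ℕ) : ℝ)) ^ d) ((m : ℝ) ^ d),
        mul_div_mul_right _ _ (ne_of_gt (pow_pos hmk d))]
      exact aux_div_mono
        (aux_toNat_mono (aux_quotLength_anti (hred m)) (hfin (m + k)))
        _ (Nat.cast_nonneg _) _ (pow_nonneg hm'.le d)
    have h2 : (eI : ℝ) ≤ (eJ : ℝ) := le_of_tendsto_of_tendsto heI' hprod hineq
    exact_mod_cast le_antisymm h2 h1
  · -- some length infinite : both multiplicities vanish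
    push_neg at hfin
    obtain ⟨m0, hm0⟩ := hfin
    have htopJ : ∀ m : ℕ, m0 ≤ m → quotLength R (J ^ m) = (⊤ : WithBot ℕ∞) := by
      intro m hm
      have h2 := aux_quotLength_anti (Ideal.pow_le_pow_right hm (I := J))
      rw [hm0] at h2
      exact top_le_iff.mp h2
    have htopI : ∀ m : ℕ, m0 ≤ m → quotLength R (I ^ m) = (⊤ : WithBot ℕ∞) := by
      intro m hm
      have h2 := aux_quotLength_anti ((Ideal.pow_right_mono hIJ m).trans
        (Ideal.pow_le_pow_right hm))
      rw [hm0] at h2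
      exact top_le_iff.mp h2
    have hI0 : Filter.Tendsto
        (fun m : ℕ => (WithBot.unbotD 0 (quotLength R (I ^ m))).toNat * (Nat.factorial d) / (m : ℝ) ^ d)
        Filter.atTop (nhds (0 : ℝ)) := by
      refine Filter.Tendsto.congr' ?_ tendsto_const_nhds
      filter_upwards [Filter.eventually_ge_atTop m0] with m hm
      rw [htopI m hm, aux_top_toNat]
      simp
    have hJ0 : Filter.Tendsto
        (fun m : ℕ => (WithBot.unbotD 0 (quotLength R (J ^ m))).toNat * (Nat.factorial d) / (m : ℝ) ^ d)
        Filter.atTop (nhds (0 : ℝ)) := by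
      refine Filter.Tendsto.congr' ?_ tendsto_const_nhds
      filter_upwards [Filter.eventually_ge_atTop m0] with m hm
      rw [htopJ m hm, aux_top_toNat]
      simp
    have h1 : (eI : ℝ) = 0 := tendsto_nhds_unique heI' hI0
    have h2 : (eJ : ℝ) = 0 := tendsto_nhds_unique heJ' hJ0
    have hz1 : eI = 0 := by exact_mod_cast h1
    have hz2 : eJ = 0 := by exact_mod_cast h2
    omega
end

section
/- Let R → S be a module-finite flat extension of commutative rings with R a reduced Noetherian ring, let M be a finitely generated S-module flat over R, and let x ∈ M. If the image of x in M ⊗_R κ(𝔭) is zero for all 𝔭 in a dense subset of Spec R, then x = 0. -/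
open TensorProduct

/-- The residue field `κ(𝔭)` of a prime `𝔭` of `R`. -/
noncomputable abbrev residueFieldAt {R : Type*} [CommRing R] (p : PrimeSpectrum R) :
    Type _ :=
  IsLocalRing.ResidueField (Localization.AtPrime p.asIdeal)

/-- **Vanishing on a dense set of fibers implies vanishing.**
Let `R → S` be a module-finite flat extension of commutative rings with `R` reduced and
Noetherian, let `M` be a finitely generated `S`-module which is flat over `R`, and let
`x ∈ M`.  If the image of `x` in `M ⊗_R κ(𝔭)` is zero for all `𝔭` in a dense subset of
`Spec R`, then `x = 0`. -/
theorem eq_zero_of_vanishing_on_dense_fibers {R S : Type*} [CommRing R] [CommRing S]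
    [Algebra R S] [Module.Finite R S] [Module.Flat R S]
    [IsReduced R] [IsNoetherianRing R]
    {M : Type*} [AddCommGroup M] [Module R M] [Module S M] [IsScalarTower R S M]
    [Module.Finite S M] [Module.Flat R M]
    (x : M) (D : Set (PrimeSpectrum R)) (hD : Dense D)
    (hx : ∀ p ∈ D,
      (x ⊗ₜ[R] (1 : residueFieldAt p)) = (0 : M ⊗[R] residueFieldAt p)) :
    x = 0 := by
  have hfin : Module.Finite R M := Module.Finite.trans S M
  have hfp : Module.FinitePresentation R M := Module.finitePresentation_of_finite R M
  have hproj : Module.Projective R M := by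
    apply Module.projective_of_localization_maximal
    intro I hI
    have : Module.Free (Localization.AtPrime I) (LocalizedModule I.primeCompl M) :=
      Module.free_of_flat_of_isLocalRing
    infer_instance
  obtain ⟨n, π, hπ⟩ := Module.Finite.exists_fin' R M
  obtain ⟨s, hs⟩ := Module.projective_lifting_property π LinearMap.id hπ
  have key : s x = 0 := by
    funext i
    set a := s x i with ha
    have hmem : ∀ p ∈ D, a ∈ p.asIdeal := by
      intro p hpD
      let φ : (M ⊗[R] residueFieldAt p) →ₗ[R] residueFieldAt p :=
        (TensorProduct.lid R (residueFieldAt p)).toLinearMap.comp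
          (LinearMap.rTensor (residueFieldAt p) ((LinearMap.proj i).comp s))
      have h0 : φ (x ⊗ₜ[R] (1 : residueFieldAt p)) = φ 0 := by rw [hx p hpD]
      rw [map_zero] at h0
      have h1 : algebraMap R (residueFieldAt p) a = 0 := by
        rw [Algebra.algebraMap_eq_smul_one]
        simpa [φ, LinearMap.rTensor_tmul] using h0
      rw [IsScalarTower.algebraMap_apply R (Localization.AtPrime p.asIdeal)
        (residueFieldAt p), IsLocalRing.ResidueField.algebraMap_eq,
        IsLocalRing.residue_eq_zero_iff] at h1
      exact (IsLocalization.AtPrime.to_map_mem_maximal_iff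
        (Localization.AtPrime p.asIdeal) p.asIdeal a).mp h1
    have hsub : D ⊆ PrimeSpectrum.zeroLocus {a} := by
      intro p hpD
      simpa [PrimeSpectrum.mem_zeroLocus] using hmem p hpD
    have huniv : (PrimeSpectrum.zeroLocus ({a} : Set R)) = Set.univ := by
      apply Set.eq_univ_of_univ_subset
      rw [← hD.closure_eq]
      exact (PrimeSpectrum.isClosed_zeroLocus ({a} : Set R)).closure_subset_iff.mpr hsub
    have hnil : a ∈ nilradical R := by
      rw [nilradical_eq_sInf]
      refine Ideal.mem_sInf.mpr ?_
      intro J hJ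
      have : (⟨J, hJ⟩ : PrimeSpectrum R) ∈ PrimeSpectrum.zeroLocus ({a} : Set R) := by
        rw [huniv]; trivial
      simpa [PrimeSpectrum.mem_zeroLocus] using this
    have : a = 0 := (mem_nilradical.mp hnil).eq_zero
    simpa using this
  have h2 : π (s x) = x := by
    have := LinearMap.congr_fun hs x
    simpa using this
  rw [key, map_zero] at h2
  exact h2.symm
end
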